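/- Let 𝒰 be an ultrafilter on ℕ and let p : ℕ → ℕ be a sequence of prime numbers which is an infinite prime relative to 𝒰 (i.e. for every natural number q the set {m | p m = q} is not in 𝒰). Then the cardinality of the quotient ring (∏_{m∈ℕ} ℤ) ⧸ (p,𝒰) equals the cardinality of the continuum 2^{ℵ₀}. -/

import Mathlib

/-- The ideal `(p, 𝒰)` of the product ring `∏_{m ∈ ℕ} ℤ`, consisting of all `a` such that
`{m | p m ∣ a m} ∈ 𝒰`. -/
def pUIdeal (𝒰 : Ultrafilter ℕ) (p : ℕ → ℕ) : Ideal (ℕ → ℤ) where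
  carrier := {a | {m | (p m : ℤ) ∣ a m} ∈ 𝒰}
  zero_mem' := by
    simp only [Set.mem_setOf_eq, Pi.zero_apply, dvd_zero, Set.setOf_true]
    exact Filter.univ_mem
  add_mem' := by
    intro a b ha hb
    have := Filter.inter_mem ha hb
    refine Filter.mem_of_superset this ?_
    rintro m ⟨h1, h2⟩
    exact dvd_add h1 h2
  smul_mem' := by
    intro c a ha
    refine Filter.mem_of_superset ha ?_
    intro m hm
    exact Dvd.dvd.mul_left hm (c m)

lemma sum_pow_two_eq (n : ℕ) : ∑ j ∈ Finset.range n, 2 ^ j = 2 ^ n - 1 := by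
  induction n with
  | zero => simp
  | succ n ih =>
    rw [Finset.sum_range_succ, ih, pow_succ]
    have : 1 ≤ 2 ^ n := Nat.one_le_two_pow
    omega

lemma binsum_lt (n : ℕ) (s : ℕ → Bool) :
    (∑ i ∈ Finset.range n, (bif s i then 2 ^ i else 0)) < 2 ^ n := by
  have h1 : (∑ i ∈ Finset.range n, (bif s i then 2 ^ i else 0))
      ≤ ∑ i ∈ Finset.range n, 2 ^ i := by
    refine Finset.sum_le_sum fun j _ => ?_
    cases s j <;> simp
  have h2 := sum_pow_two_eq n
  have h3 : 1 ≤ 2 ^ n := Nat.one_le_two_pow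
  omega

/-- Uniqueness of binary expansions. -/
lemma bin_inj : ∀ (n : ℕ) (s t : ℕ → Bool),
    (∑ i ∈ Finset.range n, (bif s i then 2 ^ i else 0)) =
      (∑ i ∈ Finset.range n, (bif t i then 2 ^ i else 0)) →
    ∀ i < n, s i = t i := by
  intro n
  induction n with
  | zero => intro s t _ i hi; omega
  | succ n ih =>
    intro s t h i hi
    rw [Finset.sum_range_succ, Finset.sum_range_succ] at h
    have hs := binsum_lt n s
    have ht := binsum_lt n t
    have hst : s n = t n := by
      cases hsn : s n <;> cases htn : t n <;> simp [hsn, htn] at h ⊢ <;> omega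
    have hsum : (∑ j ∈ Finset.range n, (bif s j then 2 ^ j else 0)) =
        (∑ j ∈ Finset.range n, (bif t j then 2 ^ j else 0)) := by
      rw [hst] at h
      cases htn : t n <;> rw [htn] at h <;> simp at h <;> omega
    rcases Nat.lt_succ_iff_lt_or_eq.mp hi with h' | h'
    · exact ih s t hsum i h'
    · rw [h', hst]

theorem residueField_card_continuum (𝒰 : Ultrafilter ℕ) (p : ℕ → ℕ)
    (hp : ∀ m, (p m).Prime) (hinf : ∀ q : ℕ, {m | p m = q} ∉ 𝒰) :
    Cardinal.mk ((ℕ → ℤ) ⧸ pUIdeal 𝒰 p) = Cardinal.continuum := by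
  -- the set where `p m ≥ q` is in the ultrafilter, for every `q`
  have hbig : ∀ q : ℕ, {m | q ≤ p m} ∈ 𝒰 := by
    intro q
    induction q with
    | zero => exact Filter.univ_mem' fun m => Nat.zero_le _
    | succ q ihq =>
      have hne : {m | p m ≠ q} ∈ 𝒰 := by
        exact Ultrafilter.compl_mem_iff_notMem.mpr (hinf q)
      refine Filter.mem_of_superset (Filter.inter_mem ihq hne) ?_
      rintro m ⟨h1, h2⟩
      simp only [Set.mem_setOf_eq] at *
      omega
  -- the truncated binary expansion map
  set A : (ℕ → Bool) → (ℕ → ℤ) := fun s m =>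
    ((∑ i ∈ Finset.range (Nat.log 2 (p m)), (bif s i then 2 ^ i else 0) : ℕ) : ℤ) with hA
  have hlt : ∀ (s : ℕ → Bool) (m : ℕ),
      (∑ i ∈ Finset.range (Nat.log 2 (p m)), (bif s i then 2 ^ i else 0)) < p m := by
    intro s m
    have h1 := binsum_lt (Nat.log 2 (p m)) s
    have h3 : 2 ^ Nat.log 2 (p m) ≤ p m :=
      Nat.pow_log_le_self 2 (hp m).pos.ne'
    omega
  -- injectivity of the induced map into the quotient
  have hinj : Function.Injective
      (fun s => Ideal.Quotient.mk (pUIdeal 𝒰 p) (A s)) := by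
    intro s t h
    have hmem : A s - A t ∈ pUIdeal 𝒰 p := Ideal.Quotient.eq.mp h
    funext i0
    -- on a 𝒰-large set, `i0 < log 2 (p m)` and `p m ∣ A s m - A t m`
    have hS : {m | 2 ^ (i0 + 1) ≤ p m} ∈ 𝒰 := hbig _
    have hD : {m | (p m : ℤ) ∣ (A s - A t) m} ∈ 𝒰 := hmem
    obtain ⟨m, hm1, hm2⟩ := Filter.nonempty_of_mem (Filter.inter_mem hS hD)
    simp only [Set.mem_setOf_eq] at hm1 hm2
    have hlog : i0 < Nat.log 2 (p m) := by
      have := (Nat.le_log_iff_pow_le one_lt_two (hp m).pos.ne').mpr hm1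
      omega
    -- the two binary expansions at `m` are congruent mod `p m` and both `< p m`
    have hm2' : (p m : ℤ) ∣
        ((∑ i ∈ Finset.range (Nat.log 2 (p m)), (bif s i then 2 ^ i else 0) : ℕ) : ℤ) -
        ((∑ i ∈ Finset.range (Nat.log 2 (p m)), (bif t i then 2 ^ i else 0) : ℕ) : ℤ) := by
      simpa [hA] using hm2
    have hs' : ((∑ i ∈ Finset.range (Nat.log 2 (p m)), (bif s i then 2 ^ i else 0) : ℕ) : ℤ)
        < (p m : ℤ) := by exact_mod_cast hlt s m
    have ht' : ((∑ i ∈ Finset.range (Nat.log 2 (p m)), (bif t i then 2 ^ i else 0) : ℕ) : ℤ)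
        < (p m : ℤ) := by exact_mod_cast hlt t m
    have h0 := Int.eq_zero_of_abs_lt_dvd hm2' (by rw [abs_sub_lt_iff]; constructor <;> omega)
    have hsum : (∑ i ∈ Finset.range (Nat.log 2 (p m)), (bif s i then 2 ^ i else 0)) =
        (∑ i ∈ Finset.range (Nat.log 2 (p m)), (bif t i then 2 ^ i else 0)) := by omega
    exact bin_inj _ s t hsum i0 hlog
  -- lower bound
  have hlow : Cardinal.continuum ≤ Cardinal.mk ((ℕ → ℤ) ⧸ pUIdeal 𝒰 p) := by
    have hle := Cardinal.mk_le_of_injective hinj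
    have hBool : Cardinal.mk (ℕ → Bool) = Cardinal.continuum := by
      rw [Cardinal.mk_arrow]
      simp [Cardinal.mk_bool, Cardinal.mk_nat, Cardinal.two_power_aleph0]
    rwa [hBool] at hle
  -- upper bound
  have hup : Cardinal.mk ((ℕ → ℤ) ⧸ pUIdeal 𝒰 p) ≤ Cardinal.continuum := by
    refine le_trans Cardinal.mk_quotient_le ?_
    rw [Cardinal.mk_arrow]
    simp only [Cardinal.mk_int, Cardinal.mk_nat, Cardinal.lift_id]
    rw [Cardinal.power_self_eq le_rfl, Cardinal.two_power_aleph0]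
  exact le_antisymm hup hlow
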